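/- arXiv:math/0508639 — 3 statements merged into one kernel-verified Lean document; each statement's English description precedes it below -/
import Mathlib

section
/- For every positive integer l, the series ∑_{q=1}^{∞} (μ(q)²/φ(q)²) |c_q(l)| converges; in particular the series ∑_{q=1}^{∞} (μ(q)²/φ(q)²) c_q(l) converges absolutely. -/
/-- The Ramanujan sum `c_q(n) = ∑_{k=1, gcd(k,q)=1}^{q} e^{2πi k n / q}`. -/
noncomputable def ramanujanSum (q : ℕ) (n : ℤ) : ℂ :=
  ∑ k ∈ (Finset.Icc 1 q).filter (fun k => Nat.gcd k q = 1),
    Complex.exp (2 * Real.pi * Complex.I * k * n / q)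

open Finset Complex

lemma fullSum (q : ℕ) (hq : 0 < q) (l : ℕ) :
    ∑ k ∈ Finset.Icc 1 q, Complex.exp (2 * Real.pi * Complex.I * k * l / q)
      = if q ∣ l then (q : ℂ) else 0 := by
  set ζ : ℂ := Complex.exp (2 * Real.pi * Complex.I * l / q) with hζ
  have hterm : ∀ k : ℕ, Complex.exp (2 * Real.pi * Complex.I * k * l / q) = ζ ^ k := by
    intro k
    rw [hζ, ← Complex.exp_nat_mul]
    ring_nf
  have hζq : ζ ^ q = 1 := by
    rw [hζ, ← Complex.exp_nat_mul]
    rw [Complex.exp_eq_one_iff]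
    refine ⟨l, ?_⟩
    have hq0 : (q : ℂ) ≠ 0 := Nat.cast_ne_zero.mpr hq.ne'
    field_simp
    norm_cast
  have hshift : ∑ k ∈ Finset.Icc 1 q, ζ ^ k = ∑ k ∈ Finset.range q, ζ ^ k := by
    have h1 : Finset.Icc 1 q = Finset.Ico 1 (q+1) := by
      rw [Finset.Ico_add_one_right_eq_Icc]
    rw [h1, Finset.sum_Ico_eq_sum_range]
    simp only [Nat.add_sub_cancel]
    calc ∑ k ∈ Finset.range q, ζ ^ (1 + k)
        = ∑ k ∈ Finset.range q, ζ * ζ ^ k := by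
          refine Finset.sum_congr rfl fun k _ => ?_
          rw [pow_add, pow_one]
      _ = ∑ k ∈ Finset.range q, ζ ^ k := by
          rcases eq_or_ne ζ 1 with h | h
          · simp [h]
          · rw [← Finset.mul_sum, geom_sum_eq h, hζq]
            simp
  simp_rw [hterm]
  rw [hshift]
  have hdvd : q ∣ l ↔ ζ = 1 := by
    constructor
    · rintro ⟨c, rfl⟩
      rw [hζ, Complex.exp_eq_one_iff]
      refine ⟨c, ?_⟩
      have hq0 : (q : ℂ) ≠ 0 := Nat.cast_ne_zero.mpr hq.ne'
      push_cast
      field_simp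
    · intro h
      rw [hζ, Complex.exp_eq_one_iff] at h
      obtain ⟨n, hn⟩ := h
      have hq0 : (q : ℂ) ≠ 0 := Nat.cast_ne_zero.mpr hq.ne'
      have hpi : (2 * Real.pi * Complex.I : ℂ) ≠ 0 := by
        simp [Real.pi_ne_zero, Complex.I_ne_zero]
      have : (l : ℂ) = n * q := by
        field_simp at hn
        exact mul_left_cancel₀ hpi (by linear_combination (2 * Real.pi * Complex.I) * hn)
      have hz : (l : ℤ) = n * q := by exact_mod_cast this
      exact Int.natCast_dvd_natCast.mp ⟨n, by linarith⟩
  rcases eq_or_ne ζ 1 with h | h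
  · rw [if_pos (hdvd.mpr h), h]
    simp
  · rw [if_neg (fun hd => h (hdvd.mp hd)), geom_sum_eq h, hζq]
    simp

lemma multSum (q d : ℕ) (hq : 0 < q) (hd : d ∣ q) (l : ℕ) :
    ∑ k ∈ (Finset.Icc 1 q).filter (fun k => d ∣ k),
      Complex.exp (2 * Real.pi * Complex.I * k * l / q)
    = ∑ j ∈ Finset.Icc 1 (q / d), Complex.exp (2 * Real.pi * Complex.I * j * l / (q / d : ℕ)) := by
  obtain ⟨m, hm⟩ := hd
  have hd0 : 0 < d := Nat.pos_of_dvd_of_pos ⟨m, hm⟩ hq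
  have hm0 : 0 < m := by
    rcases Nat.eq_zero_or_pos m with h | h
    · subst h; simp at hm; omega
    · exact h
  have hqd : q / d = m := by rw [hm, Nat.mul_div_cancel_left _ hd0]
  rw [hqd]
  refine Finset.sum_nbij' (i := fun k => k / d) (j := fun j => d * j) ?_ ?_ ?_ ?_ ?_
  · intro a ha
    simp only [Finset.mem_filter, Finset.mem_Icc] at ha ⊢
    obtain ⟨⟨h1, h2⟩, c, rfl⟩ := ha
    rw [Nat.mul_div_cancel_left _ hd0]
    constructor
    · rcases Nat.eq_zero_or_pos c with h | h
      · subst h; simp at h1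
      · exact h
    · rw [hm] at h2
      exact Nat.le_of_mul_le_mul_left h2 hd0
  · intro b hb
    simp only [Finset.mem_Icc] at hb
    simp only [Finset.mem_filter, Finset.mem_Icc]
    exact ⟨⟨Nat.mul_pos hd0 (by omega), by rw [hm]; exact Nat.mul_le_mul_left d hb.2⟩, ⟨b, rfl⟩⟩
  · intro a ha
    simp only [Finset.mem_filter, Finset.mem_Icc] at ha
    obtain ⟨_, c, rfl⟩ := ha
    show d * (d * c / d) = d * c
    rw [Nat.mul_div_cancel_left _ hd0]
  · intro b _
    show d * b / d = b
    rw [Nat.mul_div_cancel_left _ hd0]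
  · intro a ha
    simp only [Finset.mem_filter, Finset.mem_Icc] at ha
    obtain ⟨_, c, rfl⟩ := ha
    show _ = Complex.exp (2 * Real.pi * Complex.I * (↑(d * c / d)) * l / m)
    rw [Nat.mul_div_cancel_left _ hd0]
    have hd0' : (d : ℂ) ≠ 0 := Nat.cast_ne_zero.mpr hd0.ne'
    have hm0' : (m : ℂ) ≠ 0 := Nat.cast_ne_zero.mpr hm0.ne'
    congr 1
    subst hm
    push_cast
    field_simp

open ArithmeticFunction in
lemma sum_moebius (n : ℕ) :
    ∑ d ∈ n.divisors, ArithmeticFunction.moebius d = if n = 1 then 1 else 0 := by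
  have h2 : ((ArithmeticFunction.moebius * ArithmeticFunction.zeta :
      ArithmeticFunction ℤ)) n = (1 : ArithmeticFunction ℤ) n := by
    rw [ArithmeticFunction.moebius_mul_coe_zeta]
  rwa [ArithmeticFunction.coe_mul_zeta_apply, ArithmeticFunction.one_apply] at h2

open ArithmeticFunction in
lemma ramanujan_eq (q : ℕ) (hq : 0 < q) (l : ℕ) :
    ramanujanSum q l = ∑ d ∈ q.divisors, (ArithmeticFunction.moebius d : ℂ) *
      (if (q / d) ∣ l then ((q / d : ℕ) : ℂ) else 0) := by
  unfold ramanujanSum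
  rw [Finset.sum_filter]
  have key : ∀ k ∈ Finset.Icc 1 q,
      (if Nat.gcd k q = 1 then
        Complex.exp (2 * Real.pi * Complex.I * k * ((l : ℕ) : ℤ) / q) else 0)
      = ∑ d ∈ q.divisors, (if d ∣ k then (ArithmeticFunction.moebius d : ℂ) *
          Complex.exp (2 * Real.pi * Complex.I * k * (l : ℕ) / q) else 0) := by
    intro k hk
    have hg0 : Nat.gcd k q ≠ 0 := Nat.gcd_ne_zero_right hq.ne'
    have hdiv : q.divisors.filter (fun d => d ∣ k) = (Nat.gcd k q).divisors := by
      ext d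
      simp only [Finset.mem_filter, Nat.mem_divisors, Nat.dvd_gcd_iff]
      constructor
      · rintro ⟨⟨h1, h2⟩, h3⟩; exact ⟨⟨h3, h1⟩, hg0⟩
      · rintro ⟨⟨h1, h2⟩, _⟩; exact ⟨⟨h2, hq.ne'⟩, h1⟩
    rw [← Finset.sum_filter, ← Finset.sum_mul, hdiv]
    have h1 : (∑ d ∈ (Nat.gcd k q).divisors, ((ArithmeticFunction.moebius d : ℤ) : ℂ))
        = ((∑ d ∈ (Nat.gcd k q).divisors, ArithmeticFunction.moebius d : ℤ) : ℂ) := by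
      push_cast; rfl
    rw [h1, sum_moebius]
    split
    · push_cast
      rw [one_mul]
    · push_cast
      rw [zero_mul]
  rw [Finset.sum_congr rfl key, Finset.sum_comm]
  refine Finset.sum_congr rfl fun d hd => ?_
  rw [Nat.mem_divisors] at hd
  have hd0 : 0 < d := Nat.pos_of_dvd_of_pos hd.1 hq
  have hqd0 : 0 < q / d := Nat.div_pos (Nat.le_of_dvd hq hd.1) hd0
  rw [← Finset.sum_filter, ← Finset.mul_sum]
  congr 1
  rw [multSum q d hq hd.1 l, fullSum (q / d) hqd0 l]

lemma ramanujan_bound (q l : ℕ) (hq : 0 < q) (hl : 0 < l) :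
    ‖ramanujanSum q l‖ ≤ ∑ d ∈ l.divisors, (d : ℝ) := by
  rw [ramanujan_eq q hq l]
  have step1 : ‖∑ d ∈ q.divisors, (ArithmeticFunction.moebius d : ℂ) *
      (if (q / d) ∣ l then ((q / d : ℕ) : ℂ) else 0)‖
      ≤ ∑ d ∈ q.divisors, (if (q / d) ∣ l then ((q / d : ℕ) : ℝ) else 0) := by
    refine (norm_sum_le _ _).trans (Finset.sum_le_sum fun d _ => ?_)
    rw [norm_mul]
    have h1 : ‖((ArithmeticFunction.moebius d : ℤ) : ℂ)‖ ≤ 1 := by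
      rw [Complex.norm_intCast]
      have : ArithmeticFunction.moebius d = -1 ∨ ArithmeticFunction.moebius d = 0
          ∨ ArithmeticFunction.moebius d = 1 := by
        by_cases h : Squarefree d
        · rw [ArithmeticFunction.moebius_apply_of_squarefree h]
          rcases Nat.even_or_odd (ArithmeticFunction.cardFactors d) with he | ho
          · right; right; exact Even.neg_one_pow he
          · left; exact Odd.neg_one_pow ho
        · right; left; exact ArithmeticFunction.moebius_eq_zero_of_not_squarefree h
      rcases this with h | h | h <;> rw [h] <;> norm_num
    have h2 : ‖(if (q / d) ∣ l then ((q / d : ℕ) : ℂ) else 0)‖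
        = (if (q / d) ∣ l then ((q / d : ℕ) : ℝ) else 0) := by
      split <;> simp [Complex.norm_natCast]
    rw [h2]
    calc ‖((ArithmeticFunction.moebius d : ℤ) : ℂ)‖ *
        (if (q / d) ∣ l then ((q / d : ℕ) : ℝ) else 0)
        ≤ 1 * (if (q / d) ∣ l then ((q / d : ℕ) : ℝ) else 0) := by
          refine mul_le_mul_of_nonneg_right h1 ?_
          split <;> positivity
      _ = _ := one_mul _
  refine step1.trans ?_
  rw [Nat.sum_div_divisors q (fun e => if e ∣ l then (e : ℝ) else 0)]
  rw [← Finset.sum_filter]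
  refine Finset.sum_le_sum_of_subset_of_nonneg ?_ (fun i _ _ => by positivity)
  intro d hd
  simp only [Finset.mem_filter, Nat.mem_divisors] at hd ⊢
  exact ⟨hd.2, hl.ne'⟩

lemma prime_prod_ineq : ∀ s : Finset ℕ, (∀ p ∈ s, Nat.Prime p) →
    (∏ p ∈ s, p ^ 3) * (if 2 ∈ s then 1 else 8) * (if 3 ∈ s then 16 else 27)
      ≤ 216 * ∏ p ∈ s, (p - 1) ^ 4 := by
  intro s
  induction s using Finset.induction_on with
  | empty => intro _; simp
  | @insert a s ha ih =>
    intro hs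
    have hap : Nat.Prime a := hs a (Finset.mem_insert_self a s)
    have ih' := ih (fun p hp => hs p (Finset.mem_insert_of_mem hp))
    rw [Finset.prod_insert ha, Finset.prod_insert ha]
    rcases eq_or_ne a 2 with rfl | ha2
    · have h2s : (2 : ℕ) ∉ s := ha
      have e2 : 2 ∈ insert 2 s := Finset.mem_insert_self 2 s
      have e3 : (3 ∈ insert 2 s) ↔ (3 ∈ s) := by simp [Finset.mem_insert]
      rw [if_pos e2]
      rw [if_neg h2s] at ih'
      by_cases h3s : 3 ∈ s
      · rw [if_pos (e3.mpr h3s)]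
        rw [if_pos h3s] at ih'
        norm_num at ih' ⊢
        omega
      · rw [if_neg (fun h => h3s (e3.mp h))]
        rw [if_neg h3s] at ih'
        norm_num at ih' ⊢
        omega
    · rcases eq_or_ne a 3 with rfl | ha3
      · have h3s : (3 : ℕ) ∉ s := ha
        have e3 : 3 ∈ insert 3 s := Finset.mem_insert_self 3 s
        have e2 : (2 ∈ insert 3 s) ↔ (2 ∈ s) := by simp [Finset.mem_insert]
        rw [if_pos e3]
        rw [if_neg h3s] at ih'
        by_cases h2s : 2 ∈ s
        · rw [if_pos (e2.mpr h2s)]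
          rw [if_pos h2s] at ih'
          norm_num at ih' ⊢
          omega
        · rw [if_neg (fun h => h2s (e2.mp h))]
          rw [if_neg h2s] at ih'
          norm_num at ih' ⊢
          omega
      · have ha5 : 5 ≤ a := by
          by_contra hcon
          push_neg at hcon
          have h2le := hap.two_le
          interval_cases a
          · exact ha2 rfl
          · exact ha3 rfl
          · exact absurd hap (by decide)
        have hkey : a ^ 3 ≤ (a - 1) ^ 4 := by
          obtain ⟨b, rfl⟩ : ∃ b, a = b + 1 := ⟨a - 1, by omega⟩
          have hb : 4 ≤ b := by omega
          simp only [Nat.add_sub_cancel]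
          have hbz : (4 : ℤ) ≤ (b : ℤ) := by exact_mod_cast hb
          zify
          nlinarith [hbz, sq_nonneg ((b : ℤ) - 1), sq_nonneg ((b : ℤ))]
        have h2 : (2 ∈ insert a s) = (2 ∈ s) := by simp [Finset.mem_insert, Ne.symm ha2]
        have h3 : (3 ∈ insert a s) = (3 ∈ s) := by simp [Finset.mem_insert, Ne.symm ha3]
        simp only [h2, h3]
        calc a ^ 3 * (∏ p ∈ s, p ^ 3) * (if 2 ∈ s then 1 else 8) * (if 3 ∈ s then 16 else 27)
            = a ^ 3 * ((∏ p ∈ s, p ^ 3) * (if 2 ∈ s then 1 else 8) * (if 3 ∈ s then 16 else 27)) := by ring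
          _ ≤ a ^ 3 * (216 * ∏ p ∈ s, (p - 1) ^ 4) := Nat.mul_le_mul_left _ ih'
          _ ≤ (a - 1) ^ 4 * (216 * ∏ p ∈ s, (p - 1) ^ 4) := Nat.mul_le_mul_right _ hkey
          _ = 216 * ((a - 1) ^ 4 * ∏ p ∈ s, (p - 1) ^ 4) := by ring

lemma totient_bound (q : ℕ) (hq : Squarefree q) : q ^ 3 ≤ 14 * Nat.totient q ^ 4 := by
  have hq0 : q ≠ 0 := hq.ne_zero
  have hfac : ∏ p ∈ q.primeFactors, p = q := Nat.prod_primeFactors_of_squarefree hq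
  have htot : Nat.totient q = ∏ p ∈ q.primeFactors, (p - 1) := by
    rw [Nat.totient_eq_prod_factorization hq0]
    rw [Finsupp.prod]
    rw [Nat.support_factorization]
    refine Finset.prod_congr rfl fun p hp => ?_
    have h1 : q.factorization p = 1 := by
      have hle : q.factorization p ≤ 1 := (Nat.squarefree_iff_factorization_le_one hq0).mp hq p
      have hge : 1 ≤ q.factorization p := by
        rw [← Nat.Prime.dvd_iff_one_le_factorization (Nat.prime_of_mem_primeFactors hp) hq0]
        exact Nat.dvd_of_mem_primeFactors hp
      omega
    rw [h1]
    simp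
  have hmain := prime_prod_ineq q.primeFactors (fun p hp => Nat.prime_of_mem_primeFactors hp)
  rw [Finset.prod_pow, Finset.prod_pow, hfac, ← htot] at hmain
  have h16 : 16 * q ^ 3 ≤ 216 * Nat.totient q ^ 4 := by
    calc 16 * q ^ 3 = q ^ 3 * 16 := by ring
      _ ≤ q ^ 3 * ((if 2 ∈ q.primeFactors then 1 else 8) * (if 3 ∈ q.primeFactors then 16 else 27)) := by
          refine Nat.mul_le_mul_left _ ?_
          split <;> split <;> omega
      _ = q ^ 3 * (if 2 ∈ q.primeFactors then 1 else 8) * (if 3 ∈ q.primeFactors then 16 else 27) := by ring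
      _ ≤ 216 * Nat.totient q ^ 4 := hmain
  omega

/-- The series `∑_{q ≥ 1} (μ(q)²/φ(q)²) |c_q(l)|` converges; in particular
`∑_{q ≥ 1} (μ(q)²/φ(q)²) c_q(l)` converges absolutely. -/
theorem summable_moebius_sq_div_totient_sq_mul_ramanujanSum (l : ℕ) (hl : 0 < l) :
    Summable (fun q : ℕ =>
      ((ArithmeticFunction.moebius q : ℝ)) ^ 2 / ((Nat.totient q : ℝ)) ^ 2 *
        ‖ramanujanSum q l‖) ∧
    Summable (fun q : ℕ =>
      ((ArithmeticFunction.moebius q : ℂ)) ^ 2 / ((Nat.totient q : ℂ)) ^ 2 *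
        ramanujanSum q l) := by
  set σ : ℝ := ∑ d ∈ l.divisors, (d : ℝ) with hσ
  have hσ0 : 0 ≤ σ := Finset.sum_nonneg fun i _ => by positivity
  have hg : Summable (fun q : ℕ => (4 * σ) * (((q : ℝ) ^ ((3:ℝ)/2))⁻¹)) :=
    (Real.summable_nat_rpow_inv.mpr (by norm_num)).mul_left _
  have hbound : ∀ q : ℕ,
      ((ArithmeticFunction.moebius q : ℝ)) ^ 2 / ((Nat.totient q : ℝ)) ^ 2 *
        ‖ramanujanSum q l‖ ≤ (4 * σ) * (((q : ℝ) ^ ((3:ℝ)/2))⁻¹) := by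
    intro q
    rcases Nat.eq_zero_or_pos q with rfl | hq
    · simp [Real.zero_rpow (by norm_num : ((3:ℝ)/2) ≠ 0)]
    by_cases hsq : Squarefree q
    · have hμ : ((ArithmeticFunction.moebius q : ℝ)) ^ 2 = 1 := by
        have := ArithmeticFunction.moebius_sq_eq_one_of_squarefree hsq
        have h2 : (((ArithmeticFunction.moebius q) ^ 2 : ℤ) : ℝ) = ((1:ℤ):ℝ) := by
          rw [this]
        push_cast at h2
        exact h2
      rw [hμ]
      have hφ0 : (0:ℝ) < ((Nat.totient q : ℝ)) ^ 2 := by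
        have := Nat.totient_pos.mpr hq
        positivity
      have hB0 : (0:ℝ) < (q : ℝ) ^ ((3:ℝ)/2) :=
        Real.rpow_pos_of_pos (by exact_mod_cast hq) _
      have hc : ‖ramanujanSum q l‖ ≤ σ := ramanujan_bound q l hq hl
      have hc0 : 0 ≤ ‖ramanujanSum q l‖ := norm_nonneg _
      have hAB : (q : ℝ) ^ ((3:ℝ)/2) ≤ 4 * ((Nat.totient q : ℝ)) ^ 2 := by
        have hq3 : ((q : ℝ)) ^ 3 ≤ 16 * ((Nat.totient q : ℝ)) ^ 4 := by
          have h14 := totient_bound q hsq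
          have : ((q ^ 3 : ℕ) : ℝ) ≤ ((14 * Nat.totient q ^ 4 : ℕ) : ℝ) := by
            exact_mod_cast h14
          push_cast at this
          nlinarith [this, sq_nonneg ((Nat.totient q : ℝ))]
        have hsqeq : ((q : ℝ) ^ ((3:ℝ)/2)) ^ 2 = ((q : ℝ)) ^ 3 := by
          rw [← Real.rpow_natCast ((q : ℝ) ^ ((3:ℝ)/2)) 2, ← Real.rpow_mul (by positivity),
            ← Real.rpow_natCast (q:ℝ) 3]
          norm_num
        have h2 : ((q : ℝ) ^ ((3:ℝ)/2)) ^ 2 ≤ (4 * ((Nat.totient q : ℝ)) ^ 2) ^ 2 := by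
          rw [hsqeq]
          nlinarith [hq3]
        have h4 : (0:ℝ) ≤ 4 * ((Nat.totient q : ℝ)) ^ 2 := by positivity
        nlinarith [h2, hB0.le, h4]
      calc ((1:ℝ)) / ((Nat.totient q : ℝ)) ^ 2 * ‖ramanujanSum q l‖
          ≤ (1:ℝ) / ((Nat.totient q : ℝ)) ^ 2 * σ := by
            refine mul_le_mul_of_nonneg_left hc ?_
            positivity
        _ ≤ (4 * σ) * (((q : ℝ) ^ ((3:ℝ)/2))⁻¹) := by
            rw [div_mul_eq_mul_div, one_mul, div_le_iff₀ hφ0, mul_comm (4*σ)]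
            rw [inv_mul_eq_div, div_mul_eq_mul_div, le_div_iff₀ hB0] at *
            nlinarith [hσ0, hAB, hB0.le, hφ0.le]
    · have hμ : ArithmeticFunction.moebius q = 0 :=
        ArithmeticFunction.moebius_eq_zero_of_not_squarefree hsq
      rw [hμ]
      simp only [Int.cast_zero, ne_eq, OfNat.ofNat_ne_zero, not_false_eq_true, zero_pow,
        zero_div, zero_mul]
      positivity
  have h1 : Summable (fun q : ℕ =>
      ((ArithmeticFunction.moebius q : ℝ)) ^ 2 / ((Nat.totient q : ℝ)) ^ 2 *
        ‖ramanujanSum q l‖) := by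
    refine Summable.of_nonneg_of_le (fun q => ?_) hbound hg
    positivity
  refine ⟨h1, ?_⟩
  refine Summable.of_norm (h1.congr fun q => ?_)
  simp only [norm_mul, norm_div, norm_pow, Complex.norm_intCast,
    Complex.norm_natCast]
  rw [_root_.sq_abs]
end

section
/- Let m and l be positive integers. Then the absolutely convergent series over positive integers q coprime to m satisfies ∑_{q ≥ 1, gcd(q,m)=1} (μ(q)²/φ(q)²) c_q(l) = ∏_{p prime, p ∤ m} (1 + c_p(l)/(p−1)²), where the infinite product converges. -/
open Finset ArithmeticFunction

namespace RamanujanAux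

lemma ramanujanSum_nat (q l : ℕ) : ramanujanSum q (l : ℤ) =
    ∑ k ∈ (Finset.Icc 1 q).filter (fun k => Nat.gcd k q = 1),
      Complex.exp (2 * Real.pi * Complex.I * k * (l : ℂ) / q) := by
  simp only [ramanujanSum, Int.cast_natCast]

lemma sum_exp_eq (l : ℕ) (hl : 0 < l) {q : ℕ} (hq : 0 < q) :
    ∑ k ∈ Icc 1 q, Complex.exp (2 * Real.pi * Complex.I * k * (l : ℂ) / q)
      = if q ∣ l then (q : ℂ) else 0 := by
  have hq0 : (q : ℂ) ≠ 0 := Nat.cast_ne_zero.mpr hq.ne'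
  set z : ℂ := Complex.exp (2 * Real.pi * Complex.I * l / q) with hz
  have hterm : ∀ k : ℕ,
      Complex.exp (2 * Real.pi * Complex.I * k * (l : ℂ) / q) = z ^ k := by
    intro k
    rw [hz, ← Complex.exp_nat_mul]
    congr 1
    ring
  simp only [hterm]
  by_cases hd : q ∣ l
  · obtain ⟨t, rfl⟩ := hd
    have hz1 : z = 1 := by
      rw [hz]
      have : 2 * (Real.pi : ℂ) * Complex.I * (q * t : ℕ) / q = (t : ℤ) * (2 * Real.pi * Complex.I) := by
        push_cast
        field_simp
      rw [this, Complex.exp_int_mul_two_pi_mul_I]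
    simp [hz1, hq]
  · have hz1 : z ≠ 1 := by
      intro h
      rw [hz, Complex.exp_eq_one_iff] at h
      obtain ⟨n, hn⟩ := h
      apply hd
      have h2 : (2 : ℂ) * Real.pi * Complex.I ≠ 0 := Complex.two_pi_I_ne_zero
      have : (l : ℂ) = n * q := by
        field_simp at hn
        have hn' : 2 * (Real.pi : ℂ) * Complex.I * l = 2 * Real.pi * Complex.I * (n * q) := by
          rw [hn]; ring
        exact mul_left_cancel₀ h2 hn'
      have h3 : (l : ℤ) = n * q := by exact_mod_cast this
      exact Int.natCast_dvd_natCast.mp ⟨n, by rw [h3]; ring⟩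
    have hzq : z ^ q = 1 := by
      rw [hz, ← Complex.exp_nat_mul]
      have : (q : ℂ) * (2 * Real.pi * Complex.I * l / q) = (l : ℤ) * (2 * Real.pi * Complex.I) := by
        push_cast
        field_simp
      rw [this, Complex.exp_int_mul_two_pi_mul_I]
    have key : ∑ k ∈ range (q + 1), z ^ k = 1 + ∑ k ∈ Icc 1 q, z ^ k := by
      have hr : range (q + 1) = insert 0 (Icc 1 q) := by
        ext x; simp; omega
      rw [hr, Finset.sum_insert (by simp), pow_zero]
    have hgeom : ∑ k ∈ range (q + 1), z ^ k = 1 := by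
      rw [geom_sum_eq hz1, pow_succ, hzq, one_mul, div_self (sub_ne_zero.mpr hz1)]
    rw [hgeom] at key
    rw [if_neg hd]
    rw [left_eq_add] at key
    exact key

lemma sum_ramanujan_divisors (l : ℕ) {q : ℕ} (hq : 0 < q) :
    ∑ d ∈ q.divisors, ramanujanSum d (l : ℤ)
      = ∑ k ∈ Icc 1 q, Complex.exp (2 * Real.pi * Complex.I * k * (l : ℂ) / q) := by
  have H := Finset.sum_fiberwise_of_maps_to (s := Icc 1 q) (t := q.divisors)
      (g := fun k => Nat.gcd k q)
      (fun k _ => Nat.mem_divisors.mpr ⟨Nat.gcd_dvd_right k q, hq.ne'⟩)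
      (fun k => Complex.exp (2 * Real.pi * Complex.I * k * (l : ℂ) / q))
  rw [← H, ← Nat.sum_div_divisors q (fun d => ramanujanSum d (l : ℤ))]
  apply Finset.sum_congr rfl
  intro d hd
  rw [Nat.mem_divisors] at hd
  obtain ⟨⟨e, rfl⟩, -⟩ := hd
  have hd0 : 0 < d := Nat.pos_of_ne_zero (by rintro rfl; simp at hq)
  have he0 : 0 < e := Nat.pos_of_ne_zero (by rintro rfl; simp at hq)
  have hde : d * e / d = e := Nat.mul_div_cancel_left e hd0
  rw [hde, ramanujanSum_nat]
  refine Finset.sum_nbij' (i := fun j => d * j) (j := fun k => k / d) ?_ ?_ ?_ ?_ ?_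
  · intro j hj
    simp only [Finset.mem_filter, Finset.mem_Icc] at hj ⊢
    obtain ⟨⟨hj1, hj2⟩, hj3⟩ := hj
    refine ⟨⟨(Nat.mul_pos hd0 (by omega)), Nat.mul_le_mul_left d hj2⟩, ?_⟩
    rw [Nat.gcd_mul_left, hj3, mul_one]
  · intro k hk
    simp only [Finset.mem_filter, Finset.mem_Icc] at hk ⊢
    obtain ⟨⟨hk1, hk2⟩, hk3⟩ := hk
    have hdk : d ∣ k := hk3 ▸ Nat.gcd_dvd_left k (d * e)
    obtain ⟨j, rfl⟩ := hdk
    rw [Nat.mul_div_cancel_left j hd0]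
    have hj1 : 1 ≤ j := Nat.one_le_iff_ne_zero.mpr (by rintro rfl; simp at hk1)
    refine ⟨⟨hj1, ?_⟩, ?_⟩
    · exact Nat.le_of_mul_le_mul_left hk2 hd0
    · have h5 := hk3
      rw [Nat.gcd_mul_left] at h5
      exact Nat.eq_of_mul_eq_mul_left hd0 (by rw [h5, mul_one])
  · intro j hj
    exact Nat.mul_div_cancel_left j hd0
  · intro k hk
    simp only [Finset.mem_filter, Finset.mem_Icc] at hk
    have hdk : d ∣ k := hk.2 ▸ Nat.gcd_dvd_left k (d * e)
    exact Nat.mul_div_cancel' hdk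
  · intro j hj
    congr 1
    have hdc : (d : ℂ) ≠ 0 := Nat.cast_ne_zero.mpr hd0.ne'
    have hec : (e : ℂ) ≠ 0 := Nat.cast_ne_zero.mpr he0.ne'
    push_cast
    field_simp
noncomputable def gfun (l : ℕ) : ArithmeticFunction ℂ :=
  ⟨fun b => if b ∣ l then (b : ℂ) else 0, by simp⟩

lemma gfun_apply (l b : ℕ) : gfun l b = if b ∣ l then (b : ℂ) else 0 := rfl

lemma gfun_mult (l : ℕ) : (gfun l).IsMultiplicative := by
  constructor
  · simp [gfun_apply, one_dvd]
  · intro a b hab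
    rw [gfun_apply, gfun_apply, gfun_apply]
    by_cases ha : a ∣ l
    · by_cases hb : b ∣ l
      · rw [if_pos (Nat.Coprime.mul_dvd_of_dvd_of_dvd hab ha hb), if_pos ha, if_pos hb]
        push_cast; ring
      · rw [if_neg (fun h => hb ((dvd_mul_left b a).trans h)), if_pos ha, if_neg hb, mul_zero]
    · rw [if_neg (fun h => ha ((dvd_mul_right a b).trans h)), if_neg ha, zero_mul]

noncomputable def cfun (l : ℕ) : ArithmeticFunction ℂ :=
  (ArithmeticFunction.moebius : ArithmeticFunction ℂ) * gfun l

lemma cfun_mult (l : ℕ) : (cfun l).IsMultiplicative :=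
  (isMultiplicative_moebius.intCast).mul (gfun_mult l)

lemma cfun_eq_ramanujanSum (l : ℕ) (hl : 0 < l) {q : ℕ} (hq : 0 < q) :
    cfun l q = ramanujanSum q (l : ℤ) := by
  have key := (sum_eq_iff_sum_mul_moebius_eq (R := ℂ)
      (f := fun d => ramanujanSum d (l : ℤ))
      (g := fun n => if n ∣ l then (n : ℂ) else 0)).mp
      (fun n hn => by rw [sum_ramanujan_divisors l hn, sum_exp_eq l hl hn]) q hq
  rw [← key, cfun, ArithmeticFunction.mul_apply]
  apply Finset.sum_congr rfl
  intro x hx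
  rw [ArithmeticFunction.intCoe_apply, gfun_apply]

lemma cfun_prime (l : ℕ) {p : ℕ} (hp : p.Prime) :
    cfun l p = (if p ∣ l then (p : ℂ) else 0) - 1 := by
  rw [cfun, ArithmeticFunction.mul_apply, Nat.sum_divisorsAntidiagonal
      (f := fun a b => ((ArithmeticFunction.moebius : ArithmeticFunction ℂ) a) * gfun l b)]
  rw [hp.divisors, Finset.sum_pair hp.one_lt.ne]
  rw [Nat.div_one, Nat.div_self hp.pos]
  simp only [ArithmeticFunction.intCoe_apply, ArithmeticFunction.moebius_apply_one,
    ArithmeticFunction.moebius_apply_prime hp, gfun_apply, one_dvd, if_pos, if_true]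
  push_cast
  ring

noncomputable def Fm (m l : ℕ) : ArithmeticFunction ℂ :=
  ⟨fun q => if Nat.Coprime q m then
      ((ArithmeticFunction.moebius q : ℂ)) ^ 2 / ((Nat.totient q : ℂ)) ^ 2 * cfun l q
    else 0, by simp⟩

lemma Fm_apply (m l q : ℕ) : Fm m l q = if Nat.Coprime q m then
    ((ArithmeticFunction.moebius q : ℂ)) ^ 2 / ((Nat.totient q : ℂ)) ^ 2 * cfun l q
  else 0 := rfl

lemma Fm_mult (m l : ℕ) : (Fm m l).IsMultiplicative := by
  constructor
  · rw [Fm_apply, if_pos (Nat.coprime_one_left m)]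
    simp [(cfun_mult l).map_one]
  · intro a b hab
    rw [Fm_apply, Fm_apply, Fm_apply]
    by_cases ha : Nat.Coprime a m
    · by_cases hb : Nat.Coprime b m
      · rw [if_pos (Nat.Coprime.mul ha hb), if_pos ha, if_pos hb,
          isMultiplicative_moebius.map_mul_of_coprime hab,
          Nat.totient_mul hab, (cfun_mult l).map_mul_of_coprime hab]
        push_cast
        ring
      · rw [if_neg (fun h => hb (Nat.Coprime.coprime_dvd_left (dvd_mul_left b a) h)),
          if_neg hb, mul_zero]
    · rw [if_neg (fun h => ha (Nat.Coprime.coprime_dvd_left (dvd_mul_right a b) h)),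
        if_neg ha, zero_mul]

lemma Fm_prime_pow (m l : ℕ) {p : ℕ} (hp : p.Prime) {e : ℕ} (he : e ≠ 0) (he1 : e ≠ 1) :
    Fm m l (p ^ e) = 0 := by
  rw [Fm_apply]
  rw [ArithmeticFunction.moebius_apply_prime_pow hp he, if_neg he1]
  simp

lemma Fm_prime_of_not_dvd (m l : ℕ) (hl : 0 < l) {p : ℕ} (hp : p.Prime) (hpm : ¬ p ∣ m) :
    Fm m l p = ramanujanSum p (l : ℤ) / (((p : ℕ) : ℂ) - 1) ^ 2 := by
  rw [Fm_apply, if_pos ((Nat.Prime.coprime_iff_not_dvd hp).mpr hpm),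
    ArithmeticFunction.moebius_apply_prime hp, cfun_eq_ramanujanSum l hl hp.pos,
    Nat.totient_prime hp]
  have : ((p - 1 : ℕ) : ℂ) = (p : ℂ) - 1 := by
    push_cast [Nat.cast_sub hp.one_le]
    ring
  rw [this]
  push_cast
  ring

lemma Fm_prime_of_dvd (m l : ℕ) {p : ℕ} (hp : p.Prime) (hpm : p ∣ m) :
    Fm m l p = 0 := by
  rw [Fm_apply, if_neg]
  intro h
  exact hp.one_lt.ne' (Nat.Coprime.eq_one_of_dvd h hpm)

lemma tsum_norm_Fm_prime_pow (m l : ℕ) {p : ℕ} (hp : p.Prime) :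
    ∑' e : ℕ, ‖Fm m l (p ^ e)‖ = 1 + ‖Fm m l p‖ := by
  rw [tsum_eq_sum (s := {0, 1})
      (fun e he => by
        simp only [Finset.mem_insert, Finset.mem_singleton] at he
        push_neg at he
        rw [Fm_prime_pow m l hp he.1 he.2, norm_zero])]
  rw [Finset.sum_pair (by norm_num : (0:ℕ) ≠ 1), pow_zero, pow_one, (Fm_mult m l).1,
    norm_one]

lemma tsum_Fm_prime_pow (m l : ℕ) {p : ℕ} (hp : p.Prime) :
    ∑' e : ℕ, Fm m l (p ^ e) = 1 + Fm m l p := by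
  rw [tsum_eq_sum (s := {0, 1})
      (fun e he => by
        simp only [Finset.mem_insert, Finset.mem_singleton] at he
        push_neg at he
        rw [Fm_prime_pow m l hp he.1 he.2])]
  rw [Finset.sum_pair (by norm_num : (0:ℕ) ≠ 1), pow_zero, pow_one, (Fm_mult m l).1]

lemma norm_Fm_prime_le (m l : ℕ) (hl : 0 < l) {p : ℕ} (hp : p.Prime) :
    ‖Fm m l p‖ ≤ (if p ∣ l then 1 else 0) + 4 / (p : ℝ) ^ 2 := by
  have hP : (2 : ℝ) ≤ (p : ℝ) := by exact_mod_cast hp.two_le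
  have hP0 : (0 : ℝ) < (p : ℝ) := by linarith
  by_cases hpm : p ∣ m
  · rw [Fm_prime_of_dvd m l hp hpm, norm_zero]
    have : (0:ℝ) ≤ 4 / (p : ℝ) ^ 2 := by positivity
    split <;> linarith
  · rw [Fm_apply, if_pos ((hp.coprime_iff_not_dvd).mpr hpm), cfun_prime l hp,
      ArithmeticFunction.moebius_apply_prime hp, Nat.totient_prime hp]
    have hc : ((p - 1 : ℕ) : ℂ) = ((p : ℂ) - 1) := by
      push_cast [Nat.cast_sub hp.one_le]; ring
    have hnc : ‖((p : ℂ) - 1)‖ = (p : ℝ) - 1 := by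
      rw [← hc, Complex.norm_natCast]
      push_cast [Nat.cast_sub hp.one_le]; ring
    rw [norm_mul, norm_div, hc]
    simp only [Int.cast_neg, Int.cast_one, neg_one_sq, norm_one, norm_pow, hnc]
    by_cases hpl : p ∣ l
    · rw [if_pos hpl, if_pos hpl]
      have h1 : ‖(p : ℂ) - 1‖ = (p : ℝ) - 1 := hnc
      have h2 : (1 : ℝ) ≤ (p : ℝ) - 1 := by linarith
      rw [h1]
      have h3 : 1 / ((p:ℝ) - 1) ^ 2 * ((p:ℝ) - 1) ≤ 1 := by
        rw [div_mul_eq_mul_div, one_mul, div_le_one (by positivity)]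
        nlinarith
      have h4 : (0:ℝ) ≤ 4 / (p : ℝ) ^ 2 := by positivity
      linarith
    · rw [if_neg hpl, if_neg hpl, zero_sub, norm_neg, norm_one, mul_one, zero_add]
      rw [div_le_div_iff₀ (by nlinarith) (by positivity)]
      nlinarith

lemma sum_norm_Fm_primes_le (m l : ℕ) (hl : 0 < l) (s : Finset ℕ) :
    ∑ p ∈ s.filter Nat.Prime, ‖Fm m l p‖
      ≤ ((l : ℝ) + 1) + 4 * ∑' n : ℕ, 1 / (n : ℝ) ^ 2 := by
  have hT : Summable (fun n : ℕ => 1 / (n : ℝ) ^ 2) :=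
    Real.summable_one_div_nat_pow.mpr one_lt_two
  set t := s.filter Nat.Prime with ht
  calc ∑ p ∈ t, ‖Fm m l p‖
      ≤ ∑ p ∈ t, ((if p ∣ l then 1 else 0) + 4 / (p : ℝ) ^ 2) := by
        apply Finset.sum_le_sum
        intro p hps
        exact norm_Fm_prime_le m l hl (Finset.mem_filter.mp hps).2
    _ = (∑ p ∈ t, (if p ∣ l then (1:ℝ) else 0)) + ∑ p ∈ t, 4 / (p : ℝ) ^ 2 :=
        Finset.sum_add_distrib
    _ ≤ ((l : ℝ) + 1) + 4 * ∑' n : ℕ, 1 / (n : ℝ) ^ 2 := by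
        gcongr ?_ + ?_
        · rw [Finset.sum_boole]
          have hsub : t.filter (· ∣ l) ⊆ l.divisors := by
            intro x hx
            simp only [Finset.mem_filter] at hx
            exact Nat.mem_divisors.mpr ⟨hx.2, hl.ne'⟩
          have hsub2 : l.divisors ⊆ Finset.range (l + 1) := by
            intro d hd
            rw [Finset.mem_range]
            exact Nat.lt_succ_of_le (Nat.le_of_dvd hl (Nat.mem_divisors.mp hd).1)
          have := Finset.card_le_card (hsub.trans hsub2)
          rw [Finset.card_range] at this
          exact_mod_cast this
        · calc ∑ p ∈ t, 4 / (p : ℝ) ^ 2 = 4 * ∑ p ∈ t, 1 / (p : ℝ) ^ 2 := by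
                rw [Finset.mul_sum]
                apply Finset.sum_congr rfl
                intro p _
                ring
            _ ≤ 4 * ∑' n : ℕ, 1 / (n : ℝ) ^ 2 := by
                gcongr
                exact Summable.sum_le_tsum t (fun i _ => by positivity) hT

set_option maxHeartbeats 1000000 in
lemma summable_norm_Fm (m l : ℕ) (hl : 0 < l) :
    Summable (fun n : ℕ => ‖Fm m l n‖) := by
  set B : ℝ := ((l : ℝ) + 1) + 4 * ∑' n : ℕ, 1 / (n : ℝ) ^ 2 with hB
  apply summable_of_sum_le (fun n => norm_nonneg _)
  intro u
  set N := (u.sup _root_.id) + 1 with hN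
  clear_value N
  have hf1 : ‖Fm m l 1‖ = 1 := by rw [(Fm_mult m l).1, norm_one]
  have hmul : ∀ {a b : ℕ}, Nat.Coprime a b →
      ‖Fm m l (a * b)‖ = ‖Fm m l a‖ * ‖Fm m l b‖ :=
    fun hab => by rw [(Fm_mult m l).2 hab, norm_mul]
  have hps : ∀ {p : ℕ}, p.Prime → Summable (fun e : ℕ => ‖‖Fm m l (p ^ e)‖‖) := by
    intro p hp
    apply summable_of_ne_finset_zero (s := ({0, 1} : Finset ℕ))
    intro e he
    simp only [Finset.mem_insert, Finset.mem_singleton] at he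
    push_neg at he
    rw [Fm_prime_pow m l hp he.1 he.2, norm_zero, norm_zero]
  have key := EulerProduct.summable_and_hasSum_factoredNumbers_prod_filter_prime_tsum
      (f := fun n => ‖Fm m l n‖) hf1 hmul hps (Finset.range N)
  have hprod_le : ∏ p ∈ (Finset.range N).filter Nat.Prime, ∑' e : ℕ, ‖Fm m l (p ^ e)‖
      ≤ Real.exp B := by
    calc ∏ p ∈ (Finset.range N).filter Nat.Prime, ∑' e : ℕ, ‖Fm m l (p ^ e)‖
        = ∏ p ∈ (Finset.range N).filter Nat.Prime, (1 + ‖Fm m l p‖) :=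
          Finset.prod_congr rfl fun p hp =>
            tsum_norm_Fm_prime_pow m l (Finset.mem_filter.mp hp).2
      _ ≤ ∏ p ∈ (Finset.range N).filter Nat.Prime, Real.exp ‖Fm m l p‖ := by
          apply Finset.prod_le_prod
          · intro p _; positivity
          · intro p _
            rw [add_comm]
            exact Real.add_one_le_exp _
      _ = Real.exp (∑ p ∈ (Finset.range N).filter Nat.Prime, ‖Fm m l p‖) :=
          (Real.exp_sum _ _).symm
      _ ≤ Real.exp B := Real.exp_le_exp.mpr (sum_norm_Fm_primes_le m l hl _)
  have hind := (hasSum_subtype_iff_indicator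
      (f := fun n => ‖Fm m l n‖)
      (s := Nat.factoredNumbers (Finset.range N))).mp key.2
  refine le_trans ?_ (le_trans (sum_le_hasSum u
      (fun i _ => Set.indicator_nonneg (fun _ _ => norm_nonneg _) i) hind) hprod_le)
  apply le_of_eq
  apply Finset.sum_congr rfl
  intro n hn
  by_cases h0 : n = 0
  · subst h0
    rw [Set.indicator_of_notMem (fun h => (Nat.ne_zero_of_mem_factoredNumbers h) rfl)]
    simp
  · rw [Set.indicator_of_mem]
    refine ⟨h0, fun p hp => Finset.mem_range.mpr ?_⟩
    have h1 : p ≤ n := Nat.le_of_dvd (Nat.pos_of_ne_zero h0)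
      (Nat.dvd_of_mem_primeFactorsList hp)
    have h2 : n ≤ u.sup _root_.id := Finset.le_sup (f := _root_.id) hn
    omega

end RamanujanAux

open RamanujanAux

/-- Euler product: `∑_{q ≥ 1, (q,m)=1} (μ(q)²/φ(q)²) c_q(l)
= ∏_{p prime, p ∤ m} (1 + c_p(l)/(p−1)²)`, with absolute convergence of the series
and convergence of the product. -/
theorem eulerProduct_ramanujanSum_coprime (m l : ℕ) (hm : 0 < m) (hl : 0 < l) :
    Summable (fun q : {q : ℕ // 0 < q ∧ Nat.Coprime q m} =>
      ((ArithmeticFunction.moebius (q : ℕ) : ℂ)) ^ 2 / ((Nat.totient (q : ℕ) : ℂ)) ^ 2 *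
        ramanujanSum (q : ℕ) l) ∧
    Multipliable (fun p : {p : ℕ // p.Prime ∧ ¬ (p ∣ m)} =>
      1 + ramanujanSum (p : ℕ) l / (((p : ℕ) : ℂ) - 1) ^ 2) ∧
    (∑' q : {q : ℕ // 0 < q ∧ Nat.Coprime q m},
        ((ArithmeticFunction.moebius (q : ℕ) : ℂ)) ^ 2 / ((Nat.totient (q : ℕ) : ℂ)) ^ 2 *
          ramanujanSum (q : ℕ) l)
      = ∏' p : {p : ℕ // p.Prime ∧ ¬ (p ∣ m)},
          (1 + ramanujanSum (p : ℕ) l / (((p : ℕ) : ℂ) - 1) ^ 2) := by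
  classical
  set S₁ : Set ℕ := {q | 0 < q ∧ Nat.Coprime q m} with hS₁
  set S₂ : Set ℕ := {p | p.Prime ∧ ¬ p ∣ m} with hS₂
  set G : ℕ → ℂ := fun p => 1 + ramanujanSum p l / ((p : ℂ) - 1) ^ 2 with hG
  have hsum := summable_norm_Fm m l hl
  have hFm := Fm_mult m l
  have hcongr : ∀ q : {q : ℕ // 0 < q ∧ Nat.Coprime q m},
      Fm m l (q : ℕ) = ((ArithmeticFunction.moebius (q : ℕ) : ℂ)) ^ 2 /
        ((Nat.totient (q : ℕ) : ℂ)) ^ 2 * ramanujanSum (q : ℕ) l := by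
    rintro ⟨q, hq1, hq2⟩
    rw [Fm_apply, if_pos hq2, cfun_eq_ramanujanSum l hl hq1]
  have hsub : Summable (fun q : {q : ℕ // 0 < q ∧ Nat.Coprime q m} => Fm m l (q : ℕ)) :=
    (hsum.of_norm).subtype _
  have hsummable := hsub.congr hcongr
  -- sum equality
  have hsupp : Function.support (fun n => Fm m l n) ⊆ S₁ := by
    intro n hn
    rw [Function.mem_support] at hn
    constructor
    · rcases Nat.eq_zero_or_pos n with rfl | h
      · exact absurd (ArithmeticFunction.map_zero) hn
      · exact h
    · by_contra hc
      exact hn (by rw [Fm_apply, if_neg hc])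
  have htsum : (∑' q : {q : ℕ // 0 < q ∧ Nat.Coprime q m},
      ((ArithmeticFunction.moebius (q : ℕ) : ℂ)) ^ 2 / ((Nat.totient (q : ℕ) : ℂ)) ^ 2 *
        ramanujanSum (q : ℕ) l) = ∑' n : ℕ, Fm m l n := by
    rw [← tsum_congr hcongr]
    exact tsum_subtype_eq_of_support_subset hsupp
  -- product side
  have hprod := hFm.eulerProduct_hasProd hsum
  have h1 : (fun p : Nat.Primes => ∑' e : ℕ, Fm m l ((p : ℕ) ^ e))
      = fun p : Nat.Primes => Set.mulIndicator S₂ G (p : ℕ) := by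
    funext p
    rw [tsum_Fm_prime_pow m l p.2]
    by_cases hpm : (p : ℕ) ∣ m
    · rw [Fm_prime_of_dvd m l p.2 hpm,
        Set.mulIndicator_of_notMem (s := S₂) (f := G) (fun h => h.2 hpm), add_zero]
    · rw [Fm_prime_of_not_dvd m l hl p.2 hpm,
        Set.mulIndicator_of_mem (s := S₂) (f := G) ⟨p.2, hpm⟩]
  rw [h1] at hprod
  change HasProd ((Set.mulIndicator S₂ G) ∘ Subtype.val) _ at hprod
  replace hprod := (hasProd_subtype_iff_mulIndicator (s := fun p : ℕ => Irreducible p)).mp hprod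
  rw [show Set.mulIndicator (fun p : ℕ => Irreducible p) = Set.mulIndicator {p | Nat.Prime p}
      from rfl, Set.mulIndicator_mulIndicator] at hprod
  have hinter : {p : ℕ | Nat.Prime p} ∩ S₂ = S₂ :=
    Set.inter_eq_self_of_subset_right (fun p hp => hp.1)
  rw [hinter] at hprod
  rw [← hasProd_subtype_iff_mulIndicator] at hprod
  refine ⟨hsummable, hprod.multipliable, ?_⟩
  rw [htsum]
  exact hprod.tprod_eq.symm
end

section
/- Let a, b be coprime positive integers, let q, q' be squarefree positive integers, and let k, k₁ be integers with gcd(k, q) = 1 and gcd(k₁, q') = 1. If k/q = (k₁ b)/(q' a) as rational numbers, then there exist positive integers d₁, d₂, q₁ with d₁ | a, d₂ | b, gcd(q₁, ab) = 1, q = d₁ q₁, q' = d₂ q₁, and (a/d₁) | k₁. -/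
private lemma sq_aux {n : ℕ} (hn : Squarefree n) {g : ℕ} (h : g * g ∣ n) : g = 1 :=
  Nat.isUnit_iff.mp (hn g h)

/-- If `gcd(a,b) = 1`, `q, q'` are squarefree, `gcd(k,q) = 1`, `gcd(k₁,q') = 1`, and
`k/q = k₁ b /(q' a)` as rationals, then `q = d₁ q₁`, `q' = d₂ q₁` for some `d₁ | a`,
`d₂ | b`, `gcd(q₁, ab) = 1`, and `(a/d₁) | k₁`. -/
theorem exists_factorization_of_rat_eq (a b q q' : ℕ) (k k₁ : ℤ)
    (ha : 0 < a) (hb : 0 < b) (hq : 0 < q) (hq' : 0 < q')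
    (hab : Nat.Coprime a b) (hsq : Squarefree q) (hsq' : Squarefree q')
    (hkq : Int.gcd k q = 1) (hk1q' : Int.gcd k₁ q' = 1)
    (heq : (k : ℚ) / (q : ℚ) = ((k₁ : ℚ) * (b : ℚ)) / ((q' : ℚ) * (a : ℚ))) :
    ∃ d₁ d₂ q₁ : ℕ, 0 < d₁ ∧ 0 < d₂ ∧ 0 < q₁ ∧
      d₁ ∣ a ∧ d₂ ∣ b ∧ Nat.Coprime q₁ (a * b) ∧
      q = d₁ * q₁ ∧ q' = d₂ * q₁ ∧ ((a / d₁ : ℕ) : ℤ) ∣ k₁ := by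
  have key : k * ((q' : ℤ) * a) = k₁ * b * q := by
    have h1 : (q : ℚ) ≠ 0 := Nat.cast_ne_zero.mpr hq.ne'
    have h2 : ((q' : ℚ) * a) ≠ 0 := by positivity
    rw [div_eq_div_iff h1 h2] at heq
    exact_mod_cast heq
  have hkcop : IsCoprime (k : ℤ) (q : ℤ) := Int.isCoprime_iff_gcd_eq_one.mpr hkq
  have hk1cop : IsCoprime (k₁ : ℤ) (q' : ℤ) := Int.isCoprime_iff_gcd_eq_one.mpr hk1q'
  have habZ : IsCoprime (a : ℤ) (b : ℤ) := Int.isCoprime_iff_gcd_eq_one.mpr hab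
  -- gcd(q', a) = 1
  have hq'a : Nat.Coprime q' a := by
    set g := Nat.gcd q' a with hgdef
    have hgq' : g ∣ q' := Nat.gcd_dvd_left _ _
    have hga : g ∣ a := Nat.gcd_dvd_right _ _
    have hgk1 : IsCoprime ((g : ℕ) : ℤ) k₁ :=
      hk1cop.symm.of_isCoprime_of_dvd_left (Int.natCast_dvd_natCast.mpr hgq')
    have hgb : IsCoprime ((g : ℕ) : ℤ) (b : ℤ) :=
      habZ.of_isCoprime_of_dvd_left (Int.natCast_dvd_natCast.mpr hga)
    have c1 : IsCoprime ((g : ℕ) : ℤ) ((k₁ * b : ℤ)) := hgk1.mul_right hgb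
    have c2 : IsCoprime (((g : ℕ) : ℤ) * g) (k₁ * b) := c1.mul_left c1
    have hdv : ((g : ℕ) : ℤ) * g ∣ (k₁ * b) * q := by
      rw [← key]
      exact (mul_dvd_mul (Int.natCast_dvd_natCast.mpr hgq')
        (Int.natCast_dvd_natCast.mpr hga)).trans (dvd_mul_left _ _)
    have := c2.dvd_of_dvd_mul_left hdv
    exact sq_aux hsq (by exact_mod_cast this)
  -- gcd(q, b) = 1
  have hqb : Nat.Coprime q b := by
    set g := Nat.gcd q b with hgdef
    have hgq : g ∣ q := Nat.gcd_dvd_left _ _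
    have hgb : g ∣ b := Nat.gcd_dvd_right _ _
    have hgk : IsCoprime ((g : ℕ) : ℤ) k :=
      hkcop.symm.of_isCoprime_of_dvd_left (Int.natCast_dvd_natCast.mpr hgq)
    have hgaZ : IsCoprime ((g : ℕ) : ℤ) (a : ℤ) :=
      habZ.symm.of_isCoprime_of_dvd_left (Int.natCast_dvd_natCast.mpr hgb)
    have c1 : IsCoprime ((g : ℕ) : ℤ) ((k * a : ℤ)) := hgk.mul_right hgaZ
    have c2 : IsCoprime (((g : ℕ) : ℤ) * g) (k * a) := c1.mul_left c1
    have hdv : ((g : ℕ) : ℤ) * g ∣ (k * a) * q' := by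
      have : (k * a) * (q' : ℤ) = k₁ * b * q := by linear_combination key
      rw [this]
      exact (mul_dvd_mul (Int.natCast_dvd_natCast.mpr hgb)
        (Int.natCast_dvd_natCast.mpr hgq)).trans ⟨k₁, by ring⟩
    have := c2.dvd_of_dvd_mul_left hdv
    exact sq_aux hsq' (by exact_mod_cast this)
  set d₁ := Nat.gcd q a with hd₁def
  have hd₁q : d₁ ∣ q := Nat.gcd_dvd_left _ _
  have hd₁a : d₁ ∣ a := Nat.gcd_dvd_right _ _
  set q₁ := q / d₁ with hq₁def
  have hqd : q = d₁ * q₁ := (Nat.mul_div_cancel' hd₁q).symm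
  have hd₁pos : 0 < d₁ := Nat.pos_of_dvd_of_pos hd₁q hq
  have hq₁pos : 0 < q₁ := Nat.div_pos (Nat.le_of_dvd hq hd₁q) hd₁pos
  have hq₁q : q₁ ∣ q := ⟨d₁, by rw [hqd]; ring⟩
  -- q₁ coprime to a
  have hq₁a : Nat.Coprime q₁ a := by
    set g := Nat.gcd q₁ a with hgdef
    have hgq₁ : g ∣ q₁ := Nat.gcd_dvd_left _ _
    have hga : g ∣ a := Nat.gcd_dvd_right _ _
    have hgd₁ : g ∣ d₁ := Nat.dvd_gcd (hgq₁.trans hq₁q) hga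
    have : g * g ∣ q := by rw [hqd]; exact mul_dvd_mul hgd₁ hgq₁
    exact sq_aux hsq this
  -- q ∣ q' * a, hence q₁ ∣ q'
  have hqdvd : (q : ℤ) ∣ (q' : ℤ) * a := by
    refine hkcop.symm.dvd_of_dvd_mul_left ?_
    rw [key]; exact dvd_mul_left _ _
  have hqdvdN : q ∣ q' * a := by exact_mod_cast hqdvd
  have hq₁q' : q₁ ∣ q' := hq₁a.dvd_of_dvd_mul_right (hq₁q.trans hqdvdN)
  set d₂ := q' / q₁ with hd₂def
  have hq'd : q' = d₂ * q₁ := (Nat.div_mul_cancel hq₁q').symm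
  have hd₂dvdq' : d₂ ∣ q' := ⟨q₁, hq'd⟩
  have hd₂pos : 0 < d₂ := Nat.pos_of_dvd_of_pos hd₂dvdq' hq'
  -- q' ∣ b * q
  have hq'bq : q' ∣ b * q := by
    have h1 : (q' : ℤ) ∣ (k₁ : ℤ) * (b * q) := by
      rw [← mul_assoc, ← key]; exact ⟨k * a, by ring⟩
    have h2 : (q' : ℤ) ∣ (b : ℤ) * q := hk1cop.symm.dvd_of_dvd_mul_left h1
    exact_mod_cast h2
  -- d₂ ∣ b
  have hd₂bd₁ : d₂ ∣ b * d₁ := by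
    have h1 : d₂ * q₁ ∣ (b * d₁) * q₁ := by
      rw [← hq'd, mul_assoc, ← hqd]; exact hq'bq
    exact (Nat.mul_dvd_mul_iff_right hq₁pos).mp h1
  have hd₂a : Nat.Coprime d₂ a := Nat.Coprime.coprime_dvd_left hd₂dvdq' hq'a
  have hd₂d₁ : Nat.Coprime d₂ d₁ := Nat.Coprime.coprime_dvd_right hd₁a hd₂a
  have hd₂b : d₂ ∣ b := hd₂d₁.dvd_of_dvd_mul_right hd₂bd₁
  -- q₁ coprime to a*b
  have hq₁b : Nat.Coprime q₁ b := Nat.Coprime.coprime_dvd_left hq₁q hqb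
  have hq₁ab : Nat.Coprime q₁ (a * b) := hq₁a.mul_right hq₁b
  -- a/d₁ ∣ k₁
  set a' := a / d₁ with ha'def
  have haa : a = d₁ * a' := (Nat.mul_div_cancel' hd₁a).symm
  have hd₁Z : ((d₁ : ℕ) : ℤ) ≠ 0 := Int.natCast_ne_zero.mpr hd₁pos.ne'
  have key2 : k * (q' : ℤ) * a' = k₁ * b * q₁ := by
    apply mul_left_cancel₀ hd₁Z
    have haZ : (a : ℤ) = (d₁ : ℤ) * a' := by exact_mod_cast congrArg (Nat.cast : ℕ → ℤ) haa
    have hqZ : (q : ℤ) = (d₁ : ℤ) * q₁ := by exact_mod_cast congrArg (Nat.cast : ℕ → ℤ) hqd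
    linear_combination key - k * (q' : ℤ) * haZ + k₁ * b * hqZ
  have ha'dvd : ((a' : ℕ) : ℤ) ∣ k₁ * ((b : ℤ) * q₁) := by
    rw [← mul_assoc, ← key2]; exact ⟨k * q', by ring⟩
  have ha'cop : Nat.Coprime a' (b * q₁) :=
    Nat.Coprime.coprime_dvd_left ⟨d₁, by rw [haa]; ring⟩ (hab.mul_right hq₁a.symm)
  have ha'copZ : IsCoprime ((a' : ℕ) : ℤ) ((b : ℤ) * q₁) := by
    have := Nat.isCoprime_iff_coprime.mpr ha'cop
    push_cast at this
    exact this
  have hfin : ((a' : ℕ) : ℤ) ∣ k₁ := ha'copZ.dvd_of_dvd_mul_right ha'dvd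
  exact ⟨d₁, d₂, q₁, hd₁pos, hd₂pos, hq₁pos, hd₁a, hd₂b, hq₁ab, hqd, hq'd, hfin⟩
end
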